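/- Under the Reifenberg C^{1,Dini} condition at 0 with normals n_r, for each fixed θ ∈ (0,1) there is a constant S(θ) ≥ 1 (independent of r) such that |n_r − n_{θr}| ≤ S(θ)·ω(r) for all 0 < r ≤ r₀. -/

import Mathlib

open scoped RealInnerProductSpace

set_option maxHeartbeats 1000000 in
/-- Lemma 1.4: under the (r₀,ω)-Reifenberg C^{1,Dini} condition at 0, for each fixed
θ ∈ (0,1) there is S(θ) ≥ 1 with |n_r − n_{θr}| ≤ S(θ)·ω(r) for all 0 < r ≤ r₀. -/
theorem reifenberg_normals_close (n : ℕ) (hn : 2 ≤ n)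
    (Ω : Set (EuclideanSpace ℝ (Fin n))) (hΩbdd : Bornology.IsBounded Ω)
    (h0 : (0 : EuclideanSpace ℝ (Fin n)) ∈ frontier Ω)
    (nvec : ℝ → EuclideanSpace ℝ (Fin n)) (ω : ℝ → ℝ) (r₀ : ℝ) (hr₀ : 0 < r₀)
    (hωnonneg : ∀ t, 0 ≤ t → 0 ≤ ω t)
    (hωmono : ∀ s t, 0 ≤ s → s ≤ t → ω s ≤ ω t)
    (hω0 : ω 0 = 0)
    (hunit : ∀ r, 0 < r → r ≤ r₀ → ‖nvec r‖ = 1)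
    (hrei : ∀ r, 0 < r → r ≤ r₀ →
      (Metric.ball 0 r ∩ {x : EuclideanSpace ℝ (Fin n) | r * ω r < ⟪nvec r, x⟫} ⊆
        Metric.ball 0 r ∩ Ω) ∧
      (Metric.ball 0 r ∩ Ω ⊆
        Metric.ball 0 r ∩ {x : EuclideanSpace ℝ (Fin n) | -(r * ω r) < ⟪nvec r, x⟫}))
    (θ : ℝ) (hθ0 : 0 < θ) (hθ1 : θ < 1) :
    ∃ S : ℝ, 1 ≤ S ∧ ∀ r, 0 < r → r ≤ r₀ → ‖nvec r - nvec (θ * r)‖ ≤ S * ω r := by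
  refine ⟨16 / θ, ?_, ?_⟩
  · rw [le_div_iff₀ hθ0]; linarith
  intro r hr hrr₀
  have hθr0 : 0 < θ * r := mul_pos hθ0 hr
  have hθrr : θ * r ≤ r := mul_le_of_le_one_left hr.le hθ1.le
  have hθrr₀ : θ * r ≤ r₀ := hθrr.trans hrr₀
  have ha : ‖nvec r‖ = 1 := hunit r hr hrr₀
  have hb : ‖nvec (θ * r)‖ = 1 := hunit _ hθr0 hθrr₀
  have hωr : 0 ≤ ω r := hωnonneg r hr.le
  by_cases hbig : θ / 8 < ω r
  · have h1 : ‖nvec r - nvec (θ * r)‖ ≤ 2 := by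
      calc ‖nvec r - nvec (θ * r)‖ ≤ ‖nvec r‖ + ‖nvec (θ * r)‖ := norm_sub_le _ _
        _ = 2 := by rw [ha, hb]; norm_num
    have h2 : 2 < 16 / θ * ω r := by
      rw [div_mul_eq_mul_div, lt_div_iff₀ hθ0]; linarith
    linarith
  push_neg at hbig
  -- the key implication coming from the two slab inclusions
  have himp : ∀ x : EuclideanSpace ℝ (Fin n), ‖x‖ < θ * r →
      r * ω r < ⟪nvec r, x⟫ → -(r * ω r) < ⟪nvec (θ * r), x⟫ := by
    intro x hx hax
    have hxr : x ∈ Metric.ball (0 : EuclideanSpace ℝ (Fin n)) r := by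
      rw [Metric.mem_ball, dist_zero_right]
      exact hx.trans_le hθrr
    have h1 := (hrei r hr hrr₀).1 ⟨hxr, hax⟩
    have hxθ : x ∈ Metric.ball (0 : EuclideanSpace ℝ (Fin n)) (θ * r) := by
      rw [Metric.mem_ball, dist_zero_right]; exact hx
    have h2 := (hrei (θ * r) hθr0 hθrr₀).2 ⟨hxθ, h1.2⟩
    have h3 : -(θ * r * ω (θ * r)) < ⟪nvec (θ * r), x⟫ := h2.2
    have h4 : θ * r * ω (θ * r) ≤ r * ω r := by
      have hm := hωmono (θ * r) r hθr0.le hθrr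
      have hn0 := hωnonneg (θ * r) hθr0.le
      exact mul_le_mul hθrr hm hn0 hr.le
    linarith
  clear hrei hΩbdd h0 hω0
  set a := nvec r with ha_def
  set b := nvec (θ * r) with hb_def
  set ε := r * ω r with hε_def
  set ρ := θ * r with hρ_def
  clear_value a b ε ρ
  have hρ0 : 0 < ρ := hθr0
  have hε0 : 0 ≤ ε := by rw [hε_def]; exact mul_nonneg hr.le hωr
  have hερ : 8 * ε ≤ ρ := by
    have h1 : r * ω r ≤ r * (θ / 8) := mul_le_mul_of_nonneg_left hbig hr.le
    have h2 : 8 * (r * (θ / 8)) = ρ := by rw [hρ_def]; ring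
    rw [hε_def]; linarith
  set t : ℝ := ⟪a, b⟫ with ht_def
  clear_value t
  have haa : ⟪a, a⟫ = 1 := by
    rw [real_inner_self_eq_norm_mul_norm, ha]; norm_num
  have hbb : ⟪b, b⟫ = 1 := by
    rw [real_inner_self_eq_norm_mul_norm, hb]; norm_num
  have hba : ⟪b, a⟫ = t := by rw [ht_def]; exact (real_inner_comm b a).symm
  have ht1 : t ≤ 1 := by
    have h := real_inner_le_norm a b
    rw [ha, hb, ht_def] at *
    simpa using h
  -- lower bound on t, testing with x = (ρ/2) • a
  have htlb : -(1 / 4 : ℝ) < t := by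
    have hx : ‖(ρ / 2) • a‖ < ρ := by
      rw [norm_smul, ha, Real.norm_eq_abs, abs_of_pos (by linarith : (0:ℝ) < ρ / 2),
        mul_one]
      linarith
    have hax : ε < ⟪a, (ρ / 2) • a⟫ := by
      rw [real_inner_smul_right, haa, mul_one]; linarith
    have h := himp _ hx hax
    rw [real_inner_smul_right, hba] at h
    by_contra h'
    push_neg at h'
    have h2 : ρ / 2 * t ≤ ρ / 2 * (-(1 / 4)) :=
      mul_le_mul_of_nonneg_left h' (by linarith)
    linarith only [h, h2, hερ, hε0, hρ0]
  -- the orthogonal component of b with respect to a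
  set v : EuclideanSpace ℝ (Fin n) := b - t • a with hv_def
  have hav : ⟪a, v⟫ = 0 := by
    rw [hv_def, inner_sub_right, real_inner_smul_right, haa, ← ht_def]; ring
  have hbv : ⟪b, v⟫ = 1 - t ^ 2 := by
    rw [hv_def, inner_sub_right, real_inner_smul_right, hbb, hba]; ring
  set p : ℝ := ‖v‖ with hp_def
  clear_value p
  have hp0 : 0 ≤ p := by rw [hp_def]; exact norm_nonneg _
  have hp2 : p ^ 2 = 1 - t ^ 2 := by
    rw [hp_def, ← real_inner_self_eq_norm_sq, hv_def, inner_sub_left,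
      real_inner_smul_left, ← hv_def, hbv, hav]
    ring
  -- key bound on p from the slab implication
  have hpb : 3 / 4 * ρ * p ≤ 2 * ε := by
    rcases eq_or_lt_of_le hp0 with hpz | hpp
    · rw [← hpz]
      linarith only [hε0]
    apply le_of_forall_pos_le_add
    intro η hη
    set η' : ℝ := min η (ρ / 2) with hη'_def
    have hη'0 : 0 < η' := lt_min hη (by linarith)
    have hη'ρ : η' ≤ ρ / 2 := min_le_right _ _
    have hη'η : η' ≤ η := min_le_left _ _
    have hpne : p ≠ 0 := ne_of_gt hpp
    set w : EuclideanSpace ℝ (Fin n) := (-(1 / p)) • v with hw_def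
    have hw1 : ‖w‖ = 1 := by
      rw [hw_def, norm_smul, Real.norm_eq_abs, abs_neg,
        abs_of_pos (one_div_pos.mpr hpp), ← hp_def]
      field_simp
    have haw : ⟪a, w⟫ = 0 := by
      rw [hw_def, real_inner_smul_right, hav]; ring
    have hbw : ⟪b, w⟫ = -p := by
      rw [hw_def, real_inner_smul_right, hbv, show (1 : ℝ) - t ^ 2 = p ^ 2 from hp2.symm]
      field_simp
    set c : ℝ := ε + η' with hc_def
    clear_value c
    have hc0 : 0 < c := by rw [hc_def]; linarith only [hε0, hη'0]
    have hcρ : c ≤ 5 / 8 * ρ := by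
      rw [hc_def]; linarith only [hερ, hη'ρ, hρ0]
    set x : EuclideanSpace ℝ (Fin n) := c • a + (3 / 4 * ρ) • w with hx_def
    have hxnorm2 : ‖x‖ ^ 2 = c ^ 2 + (3 / 4 * ρ) ^ 2 := by
      rw [hx_def, norm_add_sq_real, real_inner_smul_left, real_inner_smul_right, haw,
        norm_smul, norm_smul, ha, hw1, Real.norm_eq_abs, Real.norm_eq_abs,
        abs_of_pos hc0, abs_of_pos (by linarith : (0:ℝ) < 3 / 4 * ρ)]
      ring
    have hc2 : c ^ 2 ≤ 25 / 64 * ρ ^ 2 := by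
      have h6 := pow_le_pow_left₀ hc0.le hcρ 2
      have h7 : (5 / 8 * ρ) ^ 2 = 25 / 64 * ρ ^ 2 := by ring
      linarith only [h6, h7]
    have hxnorm : ‖x‖ < ρ := by
      have h2 : ‖x‖ ^ 2 < ρ ^ 2 := by
        rw [hxnorm2]
        linarith only [hc2, pow_pos hρ0 2]
      exact lt_of_pow_lt_pow_left₀ 2 hρ0.le h2
    have hax : ε < ⟪a, x⟫ := by
      rw [hx_def, inner_add_right, real_inner_smul_right, real_inner_smul_right, haa,
        haw, mul_one, mul_zero, add_zero, hc_def]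
      linarith only [hη'0]
    have h := himp x hxnorm hax
    rw [hx_def, inner_add_right, real_inner_smul_right, real_inner_smul_right, hbw,
      hba] at h
    have htc : c * t ≤ c := mul_le_of_le_one_right hc0.le ht1
    have : 3 / 4 * ρ * p ≤ 2 * ε + η' := by
      have hc_eq : c = ε + η' := hc_def
      linarith only [h, htc, hc_eq]
    linarith only [this, hη'η]
  -- deduce p is small, hence t is close to 1
  have hpsmall : p ≤ 1 / 3 := by
    by_contra h'
    push_neg at h'
    have h2 : ρ * (1 / 3) < ρ * p := mul_lt_mul_of_pos_left h' hρ0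
    linarith only [hpb, hερ, hε0, h2]
  have ht0 : 0 ≤ t := by
    by_contra h'
    push_neg at h'
    have h1 : (-t) * (-t) < (1 / 4) * (1 / 4) :=
      mul_lt_mul'' (by linarith only [htlb]) (by linarith only [htlb])
        (by linarith only [h']) (by linarith only [h'])
    have ht2 : t ^ 2 < 1 / 16 := by
      have he : t ^ 2 = (-t) * (-t) := by ring
      rw [he]; linarith only [h1]
    have hps : p ^ 2 ≤ 1 / 9 := by
      have h8 := pow_le_pow_left₀ hp0 hpsmall 2
      have h9 : ((1 : ℝ) / 3) ^ 2 = 1 / 9 := by norm_num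
      linarith only [h8, h9]
    linarith only [hp2, ht2, hps]
  have h1t : 1 - t ≤ p ^ 2 := by
    have h10 : t * t ≤ t * 1 := mul_le_mul_of_nonneg_left ht1 ht0
    have h11 : p ^ 2 = 1 - t ^ 2 := hp2
    have h12 : t ^ 2 = t * t := by ring
    linarith only [h10, h11, h12]
  have hab2 : ‖a - b‖ ^ 2 = 2 - 2 * t := by
    rw [norm_sub_sq_real, ha, hb, ← ht_def]; ring
  have hfin : ‖a - b‖ ≤ 4 * ε / ρ := by
    have hρp : ρ * p ≤ 8 / 3 * ε := by linarith only [hpb]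
    have hsq : (ρ * p) ^ 2 ≤ (8 / 3 * ε) ^ 2 :=
      pow_le_pow_left₀ (mul_nonneg hρ0.le hp0) hρp 2
    have h2 : ‖a - b‖ ^ 2 ≤ (4 * ε / ρ) ^ 2 := by
      rw [hab2, div_pow, le_div_iff₀ (pow_pos hρ0 2)]
      have h3 : (1 - t) * ρ ^ 2 ≤ p ^ 2 * ρ ^ 2 :=
        mul_le_mul_of_nonneg_right h1t (sq_nonneg ρ)
      linarith only [h3, hsq, sq_nonneg ε]
    have h4 := Real.sqrt_le_sqrt h2
    rwa [Real.sqrt_sq (norm_nonneg _), Real.sqrt_sq (div_nonneg (by linarith only [hε0]) hρ0.le)] at h4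
  have hlast : 4 * ε / ρ ≤ 16 / θ * ω r := by
    rw [div_le_iff₀ hρ0, hρ_def, hε_def]
    have h5 : 16 / θ * ω r * (θ * r) = 16 * (ω r * r) := by
      field_simp
    rw [h5]
    linarith only [mul_nonneg hr.le hωr]
  linarith only [hfin, hlast]
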